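/- Let N = 2n+2. For index sets P, Q ⊂ [1, 2n+2] define Q ⪯ P iff q_j ≤ p_j for all j and, whenever (Q,P) is critical, type(Q) = type(P). Then: (a) ⪯ is a partial order on index sets; (b) if ι is the involution exchanging n+1 and n+2 in index sets, then Q ⪯ P iff ι(Q) ⪯ ι(P); (c) Q ≤ P̄ iff Q ⪯ P or Q ⪯ ι(P), where P̄ replaces n+1 by n+2 in P and ≤ is the componentwise order. -/

import Mathlib

/-!
STATEMENT 18.  Let `N = 2n+2`.  Index sets (subsets of `[1, 2n+2]` of
cardinality `m` such that `i + j ≠ N+1 = 2n+3` for any two elements) are encoded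
as strictly increasing functions `P : Fin m → ℕ`.  With `type`, `[P]`,
criticality, `ι` and `P̄` as in the paper, and
`Q ⪯ P ↔ (∀ j, q_j ≤ p_j) ∧ (critical (Q,P) → type Q = type P)`:
(a) `⪯` is a partial order on index sets; (b) `Q ⪯ P ↔ ι(Q) ⪯ ι(P)`;
(c) `Q ≤ P̄ ↔ (Q ⪯ P ∨ Q ⪯ ι(P))`.
-/

namespace Stmt18

variable (n m : ℕ)

/-- `P` is an index set in `[1, 2n+2]`. -/
def IsIndexSet (P : Fin m → ℕ) : Prop :=
  StrictMono P ∧ (∀ j, 1 ≤ P j ∧ P j ≤ 2 * n + 2) ∧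
    ∀ i j, P i + P j ≠ 2 * n + 3

/-- the type of an index set: `0` if `P ∩ {n+1, n+2} = ∅`, otherwise `1` plus
the parity of `#([1, n+1] ∖ P)`. -/
def typeOf (P : Fin m → ℕ) : ℕ :=
  if ∀ j, P j ≠ n + 1 ∧ P j ≠ n + 2 then 0
  else 1 + ((Finset.Icc 1 (n + 1)).filter fun x => ∀ j, P j ≠ x).card % 2

/-- `[P] = P ∪ {N+1-p : p ∈ P}`. -/
def bracket (P : Fin m → ℕ) : Set ℕ :=
  {x | ∃ j, P j = x ∨ P j = 2 * n + 3 - x}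

/-- `(Q, P)` is a critical pair. -/
def Critical (Q P : Fin m → ℕ) : Prop :=
  ∃ c : ℕ, c ≤ n + 1 ∧
    (∀ x : ℕ, c ≤ x → x ≤ n + 1 → (x ∈ bracket n m P ∧ x ∈ bracket n m Q)) ∧
    (Finset.univ.filter fun j => Q j < c).card =
      (Finset.univ.filter fun j => P j < c).card

/-- `Q ⪯ P`. -/
def Preceq (Q P : Fin m → ℕ) : Prop :=
  (∀ j, Q j ≤ P j) ∧ (Critical n m Q P → typeOf n m Q = typeOf n m P)

/-- the involution `ι` exchanging `n+1` and `n+2`. -/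
def iota (P : Fin m → ℕ) : Fin m → ℕ :=
  fun j => if P j = n + 1 then n + 2 else if P j = n + 2 then n + 1 else P j

/-- `P̄`: replace a value `n+1` by `n+2`. -/
def barOf (P : Fin m → ℕ) : Fin m → ℕ :=
  fun j => if P j = n + 1 then n + 2 else P j

end Stmt18

namespace Stmt18Proof
open Finset Stmt18

variable {n m : ℕ}

lemma card_val_lt {k : ℕ} (hk : k ≤ m) :
    (Finset.univ.filter fun i : Fin m => i.val < k).card = k := by
  rw [← Finset.card_range k]
  apply Finset.card_bij (fun i _ => i.val)
  · intro a ha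
    simp only [mem_filter, mem_univ, true_and] at ha
    simpa using ha
  · intro a _ b _ h
    exact Fin.ext h
  · intro x hx
    simp only [Finset.mem_range] at hx
    exact ⟨⟨x, lt_of_lt_of_le hx hk⟩, by simp [hx], rfl⟩

lemma lt_iff_lt_card {A : Fin m → ℕ} (hA : StrictMono A) {c k : ℕ}
    (hk : (Finset.univ.filter fun j => A j < c).card = k) (j : Fin m) :
    A j < c ↔ j.val < k := by
  constructor
  · intro h
    have hsub : (Finset.univ.filter fun i : Fin m => i.val < j.val + 1) ⊆
        Finset.univ.filter fun i => A i < c := by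
      intro i hi
      simp only [mem_filter, mem_univ, true_and] at hi ⊢
      have hij : i ≤ j := Fin.le_def.mpr (by omega)
      exact lt_of_le_of_lt (hA.monotone hij) h
    have h1 := Finset.card_le_card hsub
    rw [hk, card_val_lt (by omega : j.val + 1 ≤ m)] at h1
    omega
  · intro h
    by_contra hc'
    push_neg at hc'
    have hsub : (Finset.univ.filter fun i => A i < c) ⊆
        Finset.univ.filter fun i : Fin m => i.val < j.val := by
      intro i hi
      simp only [mem_filter, mem_univ, true_and] at hi ⊢
      have : A i < A j := lt_of_lt_of_le hi hc'
      exact Fin.lt_def.mp (hA.lt_iff_lt.mp this)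
    have h1 := Finset.card_le_card hsub
    rw [hk, card_val_lt j.isLt.le] at h1
    omega

lemma card_middle {A : Fin m → ℕ} (hA : IsIndexSet n m A) {c : ℕ} (hc : c ≤ n + 1)
    (hbr : ∀ x, c ≤ x → x ≤ n + 1 → x ∈ bracket n m A) :
    (Finset.univ.filter fun j => c ≤ A j ∧ A j ≤ 2 * n + 3 - c).card = n + 2 - c := by
  have hcard : (Finset.Icc c (n+1)).card = n + 2 - c := by rw [Nat.card_Icc]
  rw [← hcard]
  apply Finset.card_bij (fun j _ => min (A j) (2 * n + 3 - A j))
  · intro a ha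
    simp only [mem_filter, mem_univ, true_and] at ha
    have hb := hA.2.1 a
    simp only [Finset.mem_Icc]
    omega
  · intro a ha b hb hab
    simp only [mem_filter, mem_univ, true_and] at ha hb
    have hba := hA.2.1 a
    have hbb := hA.2.1 b
    have hs := hA.2.2 a b
    exact hA.1.injective (by omega)
  · intro x hx
    simp only [Finset.mem_Icc] at hx
    obtain ⟨j, hj⟩ := hbr x hx.1 hx.2
    have hb := hA.2.1 j
    refine ⟨j, ?_, ?_⟩
    · simp only [mem_filter, mem_univ, true_and]; omega
    · omega

lemma bracket_of_card_middle {A : Fin m → ℕ} (hA : IsIndexSet n m A) {c : ℕ} (hc : c ≤ n + 1)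
    (hcard : (Finset.univ.filter fun j => c ≤ A j ∧ A j ≤ 2 * n + 3 - c).card = n + 2 - c) :
    ∀ x, c ≤ x → x ≤ n + 1 → x ∈ bracket n m A := by
  intro x hcx hxn
  set T := Finset.univ.filter fun j => c ≤ A j ∧ A j ≤ 2 * n + 3 - c with hT
  set f : Fin m → ℕ := fun j => min (A j) (2 * n + 3 - A j) with hf
  have hinj : Set.InjOn f T := by
    intro a ha b hb hab
    simp only [hT, coe_filter, Set.mem_setOf_eq, mem_univ, true_and] at ha hb
    have hba := hA.2.1 a
    have hbb := hA.2.1 b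
    have hs := hA.2.2 a b
    simp only [hf] at hab
    exact hA.1.injective (by omega)
  have himg : T.image f ⊆ Finset.Icc c (n+1) := by
    intro y hy
    obtain ⟨j, hj, rfl⟩ := Finset.mem_image.mp hy
    simp only [hT, mem_filter, mem_univ, true_and] at hj
    have hb := hA.2.1 j
    simp only [Finset.mem_Icc, hf]
    omega
  have hicc : (Finset.Icc c (n+1)).card = n + 2 - c := by rw [Nat.card_Icc]
  have heq : T.image f = Finset.Icc c (n+1) := by
    apply Finset.eq_of_subset_of_card_le himg
    rw [Finset.card_image_of_injOn hinj, hcard, hicc]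
  have hx : x ∈ T.image f := heq ▸ (Finset.mem_Icc.mpr ⟨hcx, hxn⟩)
  obtain ⟨j, hjT, hj⟩ := Finset.mem_image.mp hx
  simp only [hT, mem_filter, mem_univ, true_and] at hjT
  have hb := hA.2.1 j
  simp only [hf] at hj
  exact ⟨j, by omega⟩

lemma critical_mid {Q S P : Fin m → ℕ} (hQ : IsIndexSet n m Q) (hS : IsIndexSet n m S)
    (hP : IsIndexSet n m P) (hQS : ∀ j, Q j ≤ S j) (hSP : ∀ j, S j ≤ P j)
    (h : Critical n m Q P) : Critical n m Q S ∧ Critical n m S P := by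
  obtain ⟨c, hc, hbr, hcnt⟩ := h
  set k := (Finset.univ.filter fun j => P j < c).card with hk
  have hPlt := lt_iff_lt_card hP.1 (rfl : (Finset.univ.filter fun j => P j < c).card = k)
  have hQlt := lt_iff_lt_card hQ.1 hcnt
  have hbrP : ∀ x, c ≤ x → x ≤ n + 1 → x ∈ bracket n m P := fun x h1 h2 => (hbr x h1 h2).1
  have hbrQ : ∀ x, c ≤ x → x ≤ n + 1 → x ∈ bracket n m Q := fun x h1 h2 => (hbr x h1 h2).2
  have hTP := card_middle hP hc hbrP
  have hTQ := card_middle hQ hc hbrQ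
  have hsplit : ∀ (A : Fin m → ℕ),
      (Finset.univ.filter fun j => A j < c).card = k →
      (Finset.univ.filter fun j => c ≤ A j ∧ A j ≤ 2 * n + 3 - c).card = n + 2 - c →
      (Finset.univ.filter fun j => A j < 2 * n + 3 - c + 1).card = k + (n + 2 - c) := by
    intro A h1 h2
    have he : (Finset.univ.filter fun j => A j < 2 * n + 3 - c + 1) =
        (Finset.univ.filter fun j => A j < c) ∪
        (Finset.univ.filter fun j => c ≤ A j ∧ A j ≤ 2 * n + 3 - c) := by
      ext j
      simp only [mem_filter, mem_univ, true_and, Finset.mem_union]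
      omega
    rw [he, Finset.card_union_of_disjoint, h1, h2]
    simp only [Finset.disjoint_left, mem_filter, mem_univ, true_and]
    intro a ha hb
    omega
  have hQle := lt_iff_lt_card hQ.1 (hsplit Q hcnt hTQ)
  have hPle := lt_iff_lt_card hP.1 (hsplit P rfl hTP)
  have hS_cnt : (Finset.univ.filter fun j => S j < c).card = k := by
    rw [← hcnt]
    congr 1
    ext j
    simp only [mem_filter, mem_univ, true_and]
    have h1 := hQlt j
    have h2 := hPlt j
    have h3 := hQS j
    have h4 := hSP j
    omega
  have hTS : (Finset.univ.filter fun j => c ≤ S j ∧ S j ≤ 2 * n + 3 - c).card = n + 2 - c := by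
    rw [← hTQ]
    congr 1
    ext j
    simp only [mem_filter, mem_univ, true_and]
    have h1 := hQlt j
    have h2 := hPlt j
    have h3 := hQS j
    have h4 := hSP j
    have h5 := hQle j
    have h6 := hPle j
    omega
  have hbrS := bracket_of_card_middle hS hc hTS
  exact ⟨⟨c, hc, fun x h1 h2 => ⟨hbrS x h1 h2, hbrQ x h1 h2⟩, by rw [hS_cnt, hcnt]⟩,
         ⟨c, hc, fun x h1 h2 => ⟨hbrP x h1 h2, hbrS x h1 h2⟩, by rw [hS_cnt]⟩⟩


def cnt (n : ℕ) (A : Fin m → ℕ) : ℕ := (Finset.univ.filter fun j => A j ≤ n + 1).card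

lemma typeOf_eq_cnt {A : Fin m → ℕ} (hA : IsIndexSet n m A)
    (hmeet : ∃ j, A j = n + 1 ∨ A j = n + 2) :
    typeOf n m A = 1 + (n + 1 + cnt n A) % 2 := by
  unfold typeOf
  rw [if_neg (by push_neg; obtain ⟨j, hj⟩ := hmeet; exact ⟨j, by omega⟩)]
  have h1 : ((Finset.Icc 1 (n+1)).filter fun x => ∃ j, A j = x).card = cnt n A := by
    symm
    apply Finset.card_bij (fun j _ => A j)
    · intro a ha
      simp only [cnt, mem_filter, mem_univ, true_and] at ha
      have hb := hA.2.1 a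
      simp only [mem_filter, Finset.mem_Icc]
      exact ⟨⟨hb.1, ha⟩, a, rfl⟩
    · intro a _ b _ h; exact hA.1.injective h
    · intro x hx
      simp only [mem_filter, Finset.mem_Icc] at hx
      obtain ⟨⟨_, hx2⟩, j, hj⟩ := hx
      exact ⟨j, by simp only [cnt, mem_filter, mem_univ, true_and]; omega, hj⟩
  have h2 : ((Finset.Icc 1 (n+1)).filter fun x => ∃ j, A j = x).card +
      ((Finset.Icc 1 (n+1)).filter fun x => ∀ j, A j ≠ x).card = n + 1 := by
    have := Finset.card_filter_add_card_filter_not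
      (s := Finset.Icc 1 (n+1)) (p := fun x => ∃ j, A j = x)
    rw [Nat.card_Icc] at this
    have he : ((Finset.Icc 1 (n+1)).filter fun x => ¬∃ j, A j = x) =
        ((Finset.Icc 1 (n+1)).filter fun x => ∀ j, A j ≠ x) := by
      ext x; simp
    rw [he] at this
    omega
  omega

lemma cnt_eq_of_n2 {A : Fin m → ℕ} (hA : StrictMono A) {j : Fin m} (hj : A j = n + 2) :
    cnt n A = j.val := by
  unfold cnt
  have he : (Finset.univ.filter fun i => A i ≤ n + 1) =
      Finset.univ.filter fun i : Fin m => i.val < j.val := by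
    ext i
    simp only [mem_filter, mem_univ, true_and]
    have h1 : A i < A j ↔ i.val < j.val := hA.lt_iff_lt.trans Fin.lt_def
    omega
  rw [he, card_val_lt j.isLt.le]

lemma cnt_eq_of_n1 {A : Fin m → ℕ} (hA : StrictMono A) {j : Fin m} (hj : A j = n + 1) :
    cnt n A = j.val + 1 := by
  unfold cnt
  have he : (Finset.univ.filter fun i => A i ≤ n + 1) =
      Finset.univ.filter fun i : Fin m => i.val < j.val + 1 := by
    ext i
    simp only [mem_filter, mem_univ, true_and]
    have h1 : A i ≤ A j ↔ i.val ≤ j.val := hA.le_iff_le.trans Fin.le_def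
    omega
  rw [he, card_val_lt (by omega : j.val + 1 ≤ m)]

lemma iota_indexSet {A : Fin m → ℕ} (hA : IsIndexSet n m A) : IsIndexSet n m (iota n m A) := by
  refine ⟨?_, ?_, ?_⟩
  · intro i j hij
    have h1 := hA.1 hij
    have h2 := hA.2.2 i j
    simp only [iota]
    split_ifs <;> omega
  · intro j
    have := hA.2.1 j
    simp only [iota]
    split_ifs <;> omega
  · intro i j
    have h1 := hA.2.2 i j
    have h2 := hA.2.2 i i
    have h3 := hA.2.2 j j
    simp only [iota]
    split_ifs <;> omega

lemma iota_iota (A : Fin m → ℕ) : iota n m (iota n m A) = A := by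
  funext j
  simp only [iota]
  split_ifs <;> omega

lemma bracket_iota (A : Fin m → ℕ) : bracket n m (iota n m A) = bracket n m A := by
  unfold bracket
  ext x
  simp only [Set.mem_setOf_eq]
  apply exists_congr
  intro j
  simp only [iota]
  split_ifs <;> omega

lemma critical_iota_of {Q P : Fin m → ℕ} (h : Critical n m Q P) :
    Critical n m (iota n m Q) (iota n m P) := by
  obtain ⟨c, hc, hbr, hcnt⟩ := h
  refine ⟨c, hc, ?_, ?_⟩
  · intro x h1 h2
    rw [bracket_iota, bracket_iota]
    exact hbr x h1 h2
  · have e : ∀ A : Fin m → ℕ, (Finset.univ.filter fun j => iota n m A j < c) =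
        Finset.univ.filter fun j => A j < c := by
      intro A
      ext j
      simp only [mem_filter, mem_univ, true_and]
      simp only [iota]
      split_ifs <;> omega
    rw [e, e]
    exact hcnt

lemma critical_iota {Q P : Fin m → ℕ} :
    Critical n m (iota n m Q) (iota n m P) ↔ Critical n m Q P := by
  constructor
  · intro h
    have := critical_iota_of h
    rwa [iota_iota, iota_iota] at this
  · exact critical_iota_of

lemma meets_of_critical {Q P : Fin m → ℕ} (h : Critical n m Q P) :
    (∃ j, Q j = n + 1 ∨ Q j = n + 2) ∧ (∃ j, P j = n + 1 ∨ P j = n + 2) := by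
  obtain ⟨c, hc, hbr, _⟩ := h
  obtain ⟨⟨jP, hjP⟩, ⟨jQ, hjQ⟩⟩ := hbr (n+1) hc le_rfl
  exact ⟨⟨jQ, by omega⟩, ⟨jP, by omega⟩⟩

lemma type_sum {A : Fin m → ℕ} (hA : IsIndexSet n m A)
    (hmeet : ∃ j, A j = n + 1 ∨ A j = n + 2) :
    typeOf n m (iota n m A) + typeOf n m A = 3 := by
  obtain ⟨j, hj⟩ := hmeet
  have hA' := iota_indexSet hA
  have hmeet' : ∃ i, iota n m A i = n + 1 ∨ iota n m A i = n + 2 :=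
    ⟨j, by simp only [iota]; split_ifs <;> omega⟩
  rw [typeOf_eq_cnt hA ⟨j, hj⟩, typeOf_eq_cnt hA' hmeet']
  rcases hj with hj | hj
  · have c1 := cnt_eq_of_n1 hA.1 hj
    have c2 := cnt_eq_of_n2 hA'.1 (show iota n m A j = n + 2 by simp [iota, hj])
    omega
  · have c1 := cnt_eq_of_n2 hA.1 hj
    have hne : A j ≠ n + 1 := by omega
    have c2 := cnt_eq_of_n1 hA'.1 (show iota n m A j = n + 1 by simp [iota, hj, hne])
    omega


lemma preceq_iota {Q P : Fin m → ℕ} (hP : IsIndexSet n m P) (hQ : IsIndexSet n m Q)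
    (h : Preceq n m Q P) : Preceq n m (iota n m Q) (iota n m P) := by
  constructor
  · intro j
    have h1 := h.1 j
    by_cases hq1 : Q j = n + 1
    · by_cases hp2 : P j = n + 2
      · exfalso
        have hPn1 : ∀ i, P i ≠ n + 1 := by
          intro i
          have := hP.2.2 i j
          omega
        have hcrit : Critical n m Q P := by
          refine ⟨n + 1, le_rfl, ?_, ?_⟩
          · intro x hx1 hx2
            have hx : x = n + 1 := le_antisymm hx2 hx1
            subst hx
            exact ⟨⟨j, Or.inr (by omega)⟩, ⟨j, Or.inl hq1⟩⟩
          · have he : (Finset.univ.filter fun i => Q i < n + 1) =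
                Finset.univ.filter fun i => P i < n + 1 := by
              ext i
              simp only [mem_filter, mem_univ, true_and]
              have hQi : Q i < Q j ↔ i.val < j.val := hQ.1.lt_iff_lt.trans Fin.lt_def
              have hPi : P i < P j ↔ i.val < j.val := hP.1.lt_iff_lt.trans Fin.lt_def
              have := hPn1 i
              omega
            rw [he]
        have htype := h.2 hcrit
        have e1 := typeOf_eq_cnt hQ ⟨j, Or.inl hq1⟩
        have e2 := typeOf_eq_cnt hP ⟨j, Or.inr hp2⟩
        have c1 := cnt_eq_of_n1 hQ.1 hq1
        have c2 := cnt_eq_of_n2 hP.1 hp2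
        omega
      · simp only [iota]
        split_ifs <;> omega
    · simp only [iota]
      split_ifs <;> omega
  · intro hcrit'
    have hcrit : Critical n m Q P := critical_iota.mp hcrit'
    have htype := h.2 hcrit
    obtain ⟨mQ, mP⟩ := meets_of_critical hcrit
    have s1 := type_sum hQ mQ
    have s2 := type_sum hP mP
    omega

lemma caseA {P Q : Fin m → ℕ} (hP : IsIndexSet n m P) (hQ : IsIndexSet n m Q)
    (hn1 : ∀ j, P j ≠ n + 1) :
    (∀ j, Q j ≤ P j) ↔ (Preceq n m Q P ∨ Preceq n m Q (iota n m P)) := by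
  constructor
  · intro h
    by_cases hcrit : Critical n m Q P
    · by_cases htype : typeOf n m Q = typeOf n m P
      · exact Or.inl ⟨h, fun _ => htype⟩
      · right
        obtain ⟨mQ, mP⟩ := meets_of_critical hcrit
        obtain ⟨j0, hj0⟩ := mP
        have hj0' : P j0 = n + 2 := by
          have := hn1 j0
          omega
        have hQj0 : Q j0 ≠ n + 2 := by
          intro hq
          apply htype
          rw [typeOf_eq_cnt hQ ⟨j0, Or.inr hq⟩, typeOf_eq_cnt hP ⟨j0, hj0⟩,
            cnt_eq_of_n2 hQ.1 hq, cnt_eq_of_n2 hP.1 hj0']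
        have hP' := iota_indexSet hP
        have hiotaj0 : iota n m P j0 = n + 1 := by
          simp only [iota]
          rw [if_neg (hn1 j0), if_pos hj0']
        refine ⟨?_, fun _ => ?_⟩
        · intro j
          by_cases hj : j = j0
          · rw [hj, hiotaj0]
            have := h j0
            omega
          · have hne2 : P j ≠ n + 2 :=
              fun he => hj (hP.1.injective (he.trans hj0'.symm))
            simp only [iota]
            rw [if_neg (hn1 j), if_neg hne2]
            exact h j
        · have e1 := typeOf_eq_cnt hQ mQ
          have e2 := typeOf_eq_cnt hP ⟨j0, hj0⟩
          have e3 := typeOf_eq_cnt hP' ⟨j0, Or.inl hiotaj0⟩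
          have c2 := cnt_eq_of_n2 hP.1 hj0'
          have c3 := cnt_eq_of_n1 hP'.1 hiotaj0
          omega
    · exact Or.inl ⟨h, fun hc => absurd hc hcrit⟩
  · rintro (h | h) j
    · exact h.1 j
    · have h1 := h.1 j
      have h0 := hn1 j
      simp only [iota] at h1
      split_ifs at h1 <;> omega

end Stmt18Proof

open Stmt18 in
theorem stmt18 (n m : ℕ) :
    -- (a) `⪯` is a partial order on index sets
    ((∀ P : Fin m → ℕ, IsIndexSet n m P → Preceq n m P P) ∧
     (∀ P Q : Fin m → ℕ, IsIndexSet n m P → IsIndexSet n m Q →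
        Preceq n m Q P → Preceq n m P Q → P = Q) ∧
     (∀ P Q S : Fin m → ℕ, IsIndexSet n m P → IsIndexSet n m Q → IsIndexSet n m S →
        Preceq n m Q S → Preceq n m S P → Preceq n m Q P)) ∧
    -- (b) compatibility with the involution `ι`
    (∀ P Q : Fin m → ℕ, IsIndexSet n m P → IsIndexSet n m Q →
      (Preceq n m Q P ↔ Preceq n m (iota n m Q) (iota n m P))) ∧
    -- (c) `Q ≤ P̄ ↔ Q ⪯ P ∨ Q ⪯ ι(P)`
    (∀ P Q : Fin m → ℕ, IsIndexSet n m P → IsIndexSet n m Q →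
      ((∀ j, Q j ≤ barOf n m P j) ↔ (Preceq n m Q P ∨ Preceq n m Q (iota n m P)))) := by
  refine ⟨⟨?_, ?_, ?_⟩, ?_, ?_⟩
  · intro P _
    exact ⟨fun j => le_rfl, fun _ => rfl⟩
  · intro P Q _ _ h1 h2
    funext j
    exact le_antisymm (h2.1 j) (h1.1 j)
  · intro P Q S hP hQ hS hQS hSP
    refine ⟨fun j => (hQS.1 j).trans (hSP.1 j), fun hcrit => ?_⟩
    obtain ⟨hQSc, hSPc⟩ := Stmt18Proof.critical_mid hQ hS hP (fun j => hQS.1 j) (fun j => hSP.1 j) hcrit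
    exact (hQS.2 hQSc).trans (hSP.2 hSPc)
  · intro P Q hP hQ
    constructor
    · exact Stmt18Proof.preceq_iota hP hQ
    · intro h
      have := Stmt18Proof.preceq_iota (Stmt18Proof.iota_indexSet hP) (Stmt18Proof.iota_indexSet hQ) h
      rwa [Stmt18Proof.iota_iota, Stmt18Proof.iota_iota] at this
  · intro P Q hP hQ
    by_cases hn1 : ∃ j0, P j0 = n + 1
    · obtain ⟨j0, hj0⟩ := hn1
      have hbar : barOf n m P = iota n m P := by
        funext j
        have := hP.2.2 j j0
        simp only [barOf, iota]
        split_ifs <;> omega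
      have hiota_ne : ∀ j, iota n m P j ≠ n + 1 := by
        intro j
        have := hP.2.2 j j0
        simp only [iota]
        split_ifs <;> omega
      rw [hbar]
      have hca := Stmt18Proof.caseA (Stmt18Proof.iota_indexSet hP) hQ hiota_ne
      rw [Stmt18Proof.iota_iota] at hca
      rw [hca]
      exact or_comm
    · push_neg at hn1
      have hbar : barOf n m P = P := funext fun j => by simp [barOf, hn1 j]
      rw [hbar]
      exact Stmt18Proof.caseA hP hQ hn1
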